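/- For every integer n ≥ 1 and every sequence (a_k)_{k≥0} of real numbers, the discrete convolution identity Σ_{s=1}^{n} θ_{n−s} · Σ_{m=0}^{s} ω_m (a_{s−m} − a_0) = a_n − a_{n−1} holds. -/

import Mathlib

/-- The SFTR-1/2 weights `ω_m`. -/
noncomputable def sftrW (α : ℝ) : ℕ → ℝ
  | 0 => (2 * α / (α + 1)) ^ α
  | 1 => -α * (2 * α / (α + 1)) ^ (α + 1)
  | (m + 2) =>
      2 * α / (((m : ℝ) + 2) * (α + 1)) *
        (((((m : ℝ) + 2) - 1) / α - α) * sftrW α (m + 1) +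
          (α - 1) / (2 * α) * (((m : ℝ) + 2) - 2) * sftrW α m)

/-- The sequence `θ_m`. -/
noncomputable def seqTheta (α : ℝ) : ℕ → ℝ
  | 0 => ((α + 1) / (2 * α)) ^ α
  | 1 => (α - 1) * (2 * α + 1) / (α + 1) * seqTheta α 0
  | (m + 2) =>
      2 * α / (((m : ℝ) + 2) * (1 + α)) *
        (((((m : ℝ) + 2) - 1) / α - (1 - α) / (2 * α) * (2 * α + 1)) * seqTheta α (m + 1) +
          (1 - α) / (2 * α) * (3 - ((m : ℝ) + 2)) * seqTheta α m)

noncomputable def lamC (α : ℝ) : ℝ := (1 - α) / (1 + α)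
noncomputable def muC (α : ℝ) : ℝ := 2 / (α + 1)
noncomputable def kapC (α : ℝ) : ℝ := -2 * α ^ 2 / (α + 1)
noncomputable def nuC (α : ℝ) : ℝ := (α - 1) * (2 * α + 1) / (α + 1)

section
variable {α : ℝ} (h0 : 0 < α)
include h0

lemma Wrec (m : ℕ) : ((m : ℝ) + 2) * sftrW α (m + 2)
    = (muC α * ((m : ℝ) + 1) + kapC α) * sftrW α (m + 1) - lamC α * (m : ℝ) * sftrW α m := by
  have hm : ((m : ℝ) + 2) ≠ 0 := by positivity
  have hα : α ≠ 0 := h0.ne'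
  have hα1 : α + 1 ≠ 0 := by positivity
  rw [sftrW, muC, kapC, lamC]
  field_simp
  ring

lemma Trec (m : ℕ) : ((m : ℝ) + 2) * seqTheta α (m + 2)
    = (muC α * ((m : ℝ) + 1) + nuC α) * seqTheta α (m + 1) - lamC α * ((m : ℝ) - 1) * seqTheta α m := by
  have hm : ((m : ℝ) + 2) ≠ 0 := by positivity
  have hα : α ≠ 0 := h0.ne'
  have hα1 : α + 1 ≠ 0 := by positivity
  have hα1' : 1 + α ≠ 0 := by positivity
  rw [seqTheta, muC, nuC, lamC]
  field_simp
  ring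

lemma Wbase : sftrW α 1 = kapC α * sftrW α 0 := by
  have hc : (0:ℝ) < 2 * α / (α + 1) := by positivity
  rw [sftrW, sftrW, kapC, Real.rpow_add hc, Real.rpow_one]
  field_simp

omit h0 in
lemma Tbase : seqTheta α 1 = nuC α * seqTheta α 0 := by
  rw [nuC]; rfl

lemma WT0 : sftrW α 0 * seqTheta α 0 = 1 := by
  have hc : (0:ℝ) < 2 * α / (α + 1) := by positivity
  rw [sftrW, seqTheta]
  have : (α + 1) / (2 * α) = (2 * α / (α + 1))⁻¹ := by
    rw [inv_div]
  rw [this, Real.inv_rpow hc.le, mul_inv_cancel₀ (by positivity)]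

end

open Finset

noncomputable def Cc (α : ℝ) (k : ℕ) : ℝ :=
  ∑ m ∈ range (k + 1), sftrW α m * seqTheta α (k - m)

noncomputable def Dd (α : ℝ) (k : ℕ) : ℝ :=
  ∑ m ∈ range (k + 1), ((m : ℝ) + 1) * sftrW α (m + 1) * seqTheta α (k - m)

noncomputable def Ee (α : ℝ) (k : ℕ) : ℝ :=
  ∑ m ∈ range (k + 1), ((m : ℝ) + 1) * seqTheta α (m + 1) * sftrW α (k - m)

lemma Csymm (α : ℝ) (k : ℕ) :
    Cc α k = ∑ m ∈ range (k + 1), seqTheta α m * sftrW α (k - m) := by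
  rw [Cc, ← Finset.sum_range_reflect]
  apply Finset.sum_congr rfl
  intro m hm
  rw [Finset.mem_range] at hm
  have h1 : k + 1 - 1 - m = k - m := by omega
  have h2 : k - (k - m) = m := by omega
  rw [h1, h2, mul_comm]

lemma DE (α : ℝ) (k : ℕ) : Dd α k + Ee α k = ((k : ℝ) + 1) * Cc α (k + 1) := by
  have step : ((k : ℝ) + 1) * Cc α (k + 1)
      = (∑ m ∈ range (k + 2), (m : ℝ) * sftrW α m * seqTheta α (k + 1 - m))
      + ∑ m ∈ range (k + 2), ((k + 1 - m : ℕ) : ℝ) * sftrW α m * seqTheta α (k + 1 - m) := by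
    rw [Cc, Finset.mul_sum, ← Finset.sum_add_distrib]
    apply Finset.sum_congr rfl
    intro m hm
    rw [Finset.mem_range] at hm
    have : ((k + 1 - m : ℕ) : ℝ) = (k : ℝ) + 1 - m := by
      rw [Nat.cast_sub (by omega)]; push_cast; ring
    rw [this]; ring
  rw [step]
  congr 1
  · rw [Finset.sum_range_succ', Dd]
    simp only [Nat.cast_zero, zero_mul, add_zero]
    apply Finset.sum_congr rfl
    intro m hm
    have : k + 1 - (m + 1) = k - m := by omega
    rw [this]; push_cast; ring
  · rw [← Finset.sum_range_reflect]
    have e1 : ∀ m ∈ range (k + 2),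
        ((k + 1 - (k + 2 - 1 - m) : ℕ) : ℝ) * sftrW α (k + 2 - 1 - m) * seqTheta α (k + 1 - (k + 2 - 1 - m))
        = (m : ℝ) * seqTheta α m * sftrW α (k + 1 - m) := by
      intro m hm
      rw [Finset.mem_range] at hm
      have h1 : k + 2 - 1 - m = k + 1 - m := by omega
      have h2 : k + 1 - (k + 1 - m) = m := by omega
      rw [h1, h2]; ring
    rw [Finset.sum_congr rfl e1, Finset.sum_range_succ', Ee]
    simp only [Nat.cast_zero, zero_mul, add_zero]
    apply Finset.sum_congr rfl
    intro m hm
    have : k + 1 - (m + 1) = k - m := by omega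
    rw [this]; push_cast; ring

section
variable {α : ℝ} (h0 : 0 < α)
include h0

lemma Dode (k : ℕ) : Dd α (k + 2)
    = muC α * Dd α (k + 1) - lamC α * Dd α k + kapC α * Cc α (k + 2) := by
  have expand : Dd α (k + 2)
      = kapC α * (sftrW α 0 * seqTheta α (k + 2))
        + ∑ m ∈ range (k + 2), ((m : ℝ) + 2) * sftrW α (m + 2) * seqTheta α (k + 1 - m) := by
    have e : ∀ m ∈ range (k + 2),
        (((m + 1 : ℕ) : ℝ) + 1) * sftrW α (m + 1 + 1) * seqTheta α (k + 2 - (m + 1))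
        = ((m : ℝ) + 2) * sftrW α (m + 2) * seqTheta α (k + 1 - m) := by
      intro m hm
      have h1 : k + 2 - (m + 1) = k + 1 - m := by omega
      have h2 : m + 1 + 1 = m + 2 := by omega
      rw [h1, h2]; push_cast; ring
    rw [Dd, Finset.sum_range_succ', Finset.sum_congr rfl e]
    have e0 : (((0 : ℕ) : ℝ) + 1) * sftrW α (0 + 1) * seqTheta α (k + 2 - 0)
        = kapC α * (sftrW α 0 * seqTheta α (k + 2)) := by
      rw [Nat.sub_zero, Wbase h0]; push_cast; ring
    rw [e0, add_comm]
  rw [expand]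
  have term : ∀ m ∈ range (k + 2),
      ((m : ℝ) + 2) * sftrW α (m + 2) * seqTheta α (k + 1 - m)
      = muC α * (((m : ℝ) + 1) * sftrW α (m + 1) * seqTheta α (k + 1 - m))
        + kapC α * (sftrW α (m + 1) * seqTheta α (k + 1 - m))
        - lamC α * ((m : ℝ) * sftrW α m * seqTheta α (k + 1 - m)) := by
    intro m hm
    have h := Wrec h0 (α := α) m
    calc ((m : ℝ) + 2) * sftrW α (m + 2) * seqTheta α (k + 1 - m)
        = (((m : ℝ) + 2) * sftrW α (m + 2)) * seqTheta α (k + 1 - m) := by ring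
      _ = ((muC α * ((m : ℝ) + 1) + kapC α) * sftrW α (m + 1) - lamC α * (m : ℝ) * sftrW α m)
            * seqTheta α (k + 1 - m) := by rw [h]
      _ = _ := by ring
  rw [Finset.sum_congr rfl term]
  rw [Finset.sum_sub_distrib, Finset.sum_add_distrib, ← Finset.mul_sum, ← Finset.mul_sum,
    ← Finset.mul_sum]
  have hD1 : ∑ m ∈ range (k + 2), ((m : ℝ) + 1) * sftrW α (m + 1) * seqTheta α (k + 1 - m)
      = Dd α (k + 1) := rfl
  have hC : sftrW α 0 * seqTheta α (k + 2)
      + ∑ m ∈ range (k + 2), sftrW α (m + 1) * seqTheta α (k + 1 - m) = Cc α (k + 2) := by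
    rw [Cc, Finset.sum_range_succ' (fun m => sftrW α m * seqTheta α (k + 2 - m)) (k + 2)]
    rw [Nat.sub_zero, add_comm]
    congr 1
    apply Finset.sum_congr rfl
    intro m hm
    have : k + 2 - (m + 1) = k + 1 - m := by omega
    rw [this]
  have hD0 : ∑ m ∈ range (k + 2), (m : ℝ) * sftrW α m * seqTheta α (k + 1 - m) = Dd α k := by
    rw [Finset.sum_range_succ' (fun m => (m : ℝ) * sftrW α m * seqTheta α (k + 1 - m)) (k + 1)]
    simp only [Nat.cast_zero, zero_mul, add_zero]
    rw [Dd]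
    apply Finset.sum_congr rfl
    intro m hm
    have : k + 1 - (m + 1) = k - m := by omega
    rw [this]; push_cast; ring
  rw [hD1, hD0, ← hC]
  ring

lemma Eode (k : ℕ) : Ee α (k + 2)
    = muC α * Ee α (k + 1) - lamC α * Ee α k + nuC α * Cc α (k + 2) + lamC α * Cc α (k + 1) := by
  have expand : Ee α (k + 2)
      = nuC α * (seqTheta α 0 * sftrW α (k + 2))
        + ∑ m ∈ range (k + 2), ((m : ℝ) + 2) * seqTheta α (m + 2) * sftrW α (k + 1 - m) := by
    have e : ∀ m ∈ range (k + 2),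
        (((m + 1 : ℕ) : ℝ) + 1) * seqTheta α (m + 1 + 1) * sftrW α (k + 2 - (m + 1))
        = ((m : ℝ) + 2) * seqTheta α (m + 2) * sftrW α (k + 1 - m) := by
      intro m hm
      have h1 : k + 2 - (m + 1) = k + 1 - m := by omega
      have h2 : m + 1 + 1 = m + 2 := by omega
      rw [h1, h2]; push_cast; ring
    rw [Ee, Finset.sum_range_succ', Finset.sum_congr rfl e]
    have e0 : (((0 : ℕ) : ℝ) + 1) * seqTheta α (0 + 1) * sftrW α (k + 2 - 0)
        = nuC α * (seqTheta α 0 * sftrW α (k + 2)) := by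
      rw [Nat.sub_zero, Tbase (α := α)]; push_cast; ring
    rw [e0, add_comm]
  rw [expand]
  have term : ∀ m ∈ range (k + 2),
      ((m : ℝ) + 2) * seqTheta α (m + 2) * sftrW α (k + 1 - m)
      = muC α * (((m : ℝ) + 1) * seqTheta α (m + 1) * sftrW α (k + 1 - m))
        + nuC α * (seqTheta α (m + 1) * sftrW α (k + 1 - m))
        - lamC α * ((m : ℝ) * seqTheta α m * sftrW α (k + 1 - m))
        + lamC α * (seqTheta α m * sftrW α (k + 1 - m)) := by
    intro m hm
    have h := Trec h0 (α := α) m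
    calc ((m : ℝ) + 2) * seqTheta α (m + 2) * sftrW α (k + 1 - m)
        = (((m : ℝ) + 2) * seqTheta α (m + 2)) * sftrW α (k + 1 - m) := by ring
      _ = ((muC α * ((m : ℝ) + 1) + nuC α) * seqTheta α (m + 1)
            - lamC α * ((m : ℝ) - 1) * seqTheta α m) * sftrW α (k + 1 - m) := by rw [h]
      _ = _ := by ring
  rw [Finset.sum_congr rfl term]
  rw [Finset.sum_add_distrib, Finset.sum_sub_distrib, Finset.sum_add_distrib,
    ← Finset.mul_sum, ← Finset.mul_sum, ← Finset.mul_sum, ← Finset.mul_sum]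
  have hE1 : ∑ m ∈ range (k + 2), ((m : ℝ) + 1) * seqTheta α (m + 1) * sftrW α (k + 1 - m)
      = Ee α (k + 1) := rfl
  have hC2 : seqTheta α 0 * sftrW α (k + 2)
      + ∑ m ∈ range (k + 2), seqTheta α (m + 1) * sftrW α (k + 1 - m) = Cc α (k + 2) := by
    rw [Csymm, Finset.sum_range_succ' (fun m => seqTheta α m * sftrW α (k + 2 - m)) (k + 2)]
    rw [Nat.sub_zero, add_comm]
    congr 1
    apply Finset.sum_congr rfl
    intro m hm
    have : k + 2 - (m + 1) = k + 1 - m := by omega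
    rw [this]
  have hE0 : ∑ m ∈ range (k + 2), (m : ℝ) * seqTheta α m * sftrW α (k + 1 - m) = Ee α k := by
    rw [Finset.sum_range_succ' (fun m => (m : ℝ) * seqTheta α m * sftrW α (k + 1 - m)) (k + 1)]
    simp only [Nat.cast_zero, zero_mul, add_zero]
    rw [Ee]
    apply Finset.sum_congr rfl
    intro m hm
    have : k + 1 - (m + 1) = k - m := by omega
    rw [this]; push_cast; ring
  have hC1 : ∑ m ∈ range (k + 2), seqTheta α m * sftrW α (k + 1 - m) = Cc α (k + 1) := by
    rw [Csymm]
  rw [hE1, hE0, hC1, ← hC2]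
  ring

end

section
variable {α : ℝ} (h0 : 0 < α)
include h0

lemma kapnu : kapC α + nuC α = -1 := by
  have hα1 : α + 1 ≠ 0 := by positivity
  rw [kapC, nuC]
  field_simp
  ring

lemma mulam : muC α = 1 + lamC α := by
  have hα1 : α + 1 ≠ 0 := by positivity
  have hα1' : (1 : ℝ) + α ≠ 0 := by positivity
  rw [muC, lamC]
  field_simp
  ring

lemma Czero0 : Cc α 0 = 1 := by
  rw [Cc]
  simpa using WT0 h0

lemma Czero1 : Cc α 1 = -1 := by
  have hwt := WT0 h0 (α := α)
  have hkn := kapnu h0 (α := α)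
  have hω1 := Wbase h0 (α := α)
  have hθ1 := Tbase (α := α)
  rw [Cc, Finset.sum_range_succ, Finset.sum_range_succ, Finset.sum_range_zero]
  simp only [Nat.sub_zero, Nat.sub_self, zero_add]
  rw [hω1, hθ1]
  linear_combination (nuC α + kapC α) * hwt + hkn

lemma Czero2 : Cc α 2 = 0 := by
  have hwt := WT0 h0 (α := α)
  have hω1 := Wbase h0 (α := α)
  have hθ1 := Tbase (α := α)
  have hW2 := Wrec h0 (α := α) 0
  have hT2 := Trec h0 (α := α) 0
  norm_num at hW2 hT2
  have hω2 : sftrW α 2 = (muC α + kapC α) * kapC α / 2 * sftrW α 0 := by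
    linear_combination hW2 / 2 + (muC α + kapC α) / 2 * hω1
  have hθ2 : seqTheta α 2 = ((muC α + nuC α) * nuC α + lamC α) / 2 * seqTheta α 0 := by
    linear_combination hT2 / 2 + (muC α + nuC α) / 2 * hθ1
  have hE : ((muC α + nuC α) * nuC α + lamC α) / 2 + kapC α * nuC α
      + (muC α + kapC α) * kapC α / 2 = 0 := by
    have hkn := kapnu h0 (α := α)
    have hmu := mulam h0 (α := α)
    linear_combination ((kapC α + nuC α - 1 + muC α) / 2) * hkn + (-1/2 : ℝ) * hmu
  rw [Cc, Finset.sum_range_succ, Finset.sum_range_succ, Finset.sum_range_succ,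
    Finset.sum_range_zero]
  simp only [Nat.sub_zero, Nat.sub_self, zero_add]
  rw [hω1, hθ1, hω2, hθ2]
  linear_combination (((muC α + nuC α) * nuC α + lamC α) / 2 + kapC α * nuC α
      + (muC α + kapC α) * kapC α / 2) * hwt + hE

lemma Crec (k : ℕ) : ((k : ℝ) + 3) * Cc α (k + 3)
    = (muC α * ((k : ℝ) + 2) - 1) * Cc α (k + 2) - lamC α * (k : ℝ) * Cc α (k + 1) := by
  have H1 := DE α (k + 2)
  have H2 := Dode h0 (α := α) k
  have H3 := Eode h0 (α := α) k
  have H4 := DE α (k + 1)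
  have H5 := DE α k
  have H6 := kapnu h0 (α := α)
  push_cast at H1 H4 H5
  linear_combination -H1 + H2 + H3 + muC α * H4 - lamC α * H5 + Cc α (k + 2) * H6

lemma Czero (k : ℕ) : Cc α (k + 2) = 0 := by
  suffices h : ∀ k, Cc α (k + 2) = 0 ∧ Cc α (k + 3) = 0 by exact (h k).1
  intro k
  induction k with
  | zero =>
    refine ⟨Czero2 h0, ?_⟩
    have h := Crec h0 (α := α) 0
    rw [Czero2 h0] at h
    norm_num at h
    exact h
  | succ n ih =>
    refine ⟨ih.2, ?_⟩
    have h := Crec h0 (α := α) (n + 1)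
    rw [show n + 1 + 2 = n + 3 from rfl, show n + 1 + 1 = n + 2 from rfl] at h
    rw [ih.1, ih.2] at h
    have hne : ((n : ℝ) + 1 + 3) ≠ 0 := by positivity
    have h2 : ((n : ℝ) + 1 + 3) * Cc α (n + 1 + 3) = 0 := by
      push_cast at h; linear_combination h
    have := mul_eq_zero.mp h2
    rcases this with h' | h'
    · exact absurd h' hne
    · exact h'

end


theorem discrete_convolution_identity (α : ℝ) (hα : α ∈ Set.Ioo (0 : ℝ) 1) :
    ∀ n : ℕ, 1 ≤ n → ∀ a : ℕ → ℝ,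
      (∑ s ∈ Finset.Icc 1 n, seqTheta α (n - s) *
          ∑ m ∈ Finset.range (s + 1), sftrW α m * (a (s - m) - a 0)) =
        a n - a (n - 1) := by
  obtain ⟨h0, h1⟩ := hα
  intro n hn a
  set b : ℕ → ℝ := fun j => a j - a 0 with hb
  set W : PowerSeries ℝ := PowerSeries.mk (sftrW α) with hW
  set T : PowerSeries ℝ := PowerSeries.mk (seqTheta α) with hT
  set B : PowerSeries ℝ := PowerSeries.mk b with hB
  -- Step 1: T * W = 1 - X
  have key1 : T * W = 1 - PowerSeries.X := by
    apply PowerSeries.ext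
    intro k
    rw [PowerSeries.coeff_mul, Finset.Nat.sum_antidiagonal_eq_sum_range_succ_mk]
    simp only [hT, hW, PowerSeries.coeff_mk]
    have hC : (∑ m ∈ Finset.range (k + 1), seqTheta α m * sftrW α (k - m)) = Cc α k :=
      (Csymm α k).symm
    rw [hC, map_sub, PowerSeries.coeff_one, PowerSeries.coeff_X]
    match k with
    | 0 => simpa using Czero0 h0
    | 1 => simpa using Czero1 h0
    | (k + 2) => simpa using Czero h0 k
  -- Step 2: LHS equals coeff n of T * (W * B)
  have key2 : (∑ s ∈ Finset.Icc 1 n, seqTheta α (n - s) *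
          ∑ m ∈ Finset.range (s + 1), sftrW α m * (a (s - m) - a 0))
      = PowerSeries.coeff n (T * (W * B)) := by
    rw [PowerSeries.coeff_mul, Finset.Nat.sum_antidiagonal_eq_sum_range_succ_mk]
    have inner : ∀ j : ℕ, PowerSeries.coeff j (W * B)
        = ∑ m ∈ Finset.range (j + 1), sftrW α m * b (j - m) := by
      intro j
      rw [PowerSeries.coeff_mul, Finset.Nat.sum_antidiagonal_eq_sum_range_succ_mk]
      simp only [hW, hB, PowerSeries.coeff_mk]
    have hset : Finset.range (n + 1) = insert 0 (Finset.Icc 1 n) := by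
      ext x; simp [Finset.mem_range, Finset.mem_Icc]; omega
    have step1 : (∑ s ∈ Finset.range (n + 1), seqTheta α (n - s) *
            ∑ m ∈ Finset.range (s + 1), sftrW α m * b (s - m))
        = ∑ s ∈ Finset.Icc 1 n, seqTheta α (n - s) *
            ∑ m ∈ Finset.range (s + 1), sftrW α m * (a (s - m) - a 0) := by
      rw [hset, Finset.sum_insert (by simp)]
      have hzero : seqTheta α (n - 0) *
          ∑ m ∈ Finset.range (0 + 1), sftrW α m * b (0 - m) = 0 := by
        simp [hb]
      rw [hzero, zero_add]
    have lhsEq : (∑ s ∈ Finset.range (n + 1), seqTheta α (n - s) *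
            ∑ m ∈ Finset.range (s + 1), sftrW α m * b (s - m))
        = ∑ s ∈ Finset.range (n + 1), seqTheta α s *
            ∑ m ∈ Finset.range (n - s + 1), sftrW α m * b (n - s - m) := by
      rw [← Finset.sum_range_reflect (fun s => seqTheta α s *
        ∑ m ∈ Finset.range (n - s + 1), sftrW α m * b (n - s - m)) (n + 1)]
      apply Finset.sum_congr rfl
      intro s hs
      rw [Finset.mem_range] at hs
      have e1 : n + 1 - 1 - s = n - s := by omega
      have e2 : n - (n - s) = s := by omega
      simp only [e1, e2]
    calc (∑ s ∈ Finset.Icc 1 n, seqTheta α (n - s) *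
            ∑ m ∈ Finset.range (s + 1), sftrW α m * (a (s - m) - a 0))
        = ∑ s ∈ Finset.range (n + 1), seqTheta α (n - s) *
            ∑ m ∈ Finset.range (s + 1), sftrW α m * b (s - m) := step1.symm
      _ = ∑ s ∈ Finset.range (n + 1), seqTheta α s *
            ∑ m ∈ Finset.range (n - s + 1), sftrW α m * b (n - s - m) := lhsEq
      _ = ∑ k ∈ Finset.range (n + 1),
            PowerSeries.coeff (k, n - k).1 T * PowerSeries.coeff (k, n - k).2 (W * B) := by
          apply Finset.sum_congr rfl
          intro k hk
          show seqTheta α k * _ = PowerSeries.coeff k T * PowerSeries.coeff (n - k) (W * B)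
          rw [inner, hT, PowerSeries.coeff_mk]
  rw [key2, ← mul_assoc, key1, sub_mul, one_mul, map_sub]
  obtain ⟨n', rfl⟩ : ∃ n', n = n' + 1 := ⟨n - 1, by omega⟩
  rw [PowerSeries.coeff_succ_X_mul]
  simp only [hB, PowerSeries.coeff_mk, hb]
  ring_nf
  simp
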